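/- Let φ be a 3SAT instance with n variables and m clauses such that every clause contains exactly 3 distinct variables and every variable occurs in exactly d clauses (so 3m = dn), with m ≥ 2 and n ≥ 2. Let a_{ij} ∈ {0,1} be the incidence matrix (a_{ij} = 1 iff variable x_j occurs in clause C_i), and for I ⊆ [m], J ⊆ [n] let S_{IJ} := Σ_{i∈I, j∈J} a_{ij}. Fix integers 1 ≤ k ≤ m and 1 ≤ ℓ ≤ n, and let I and J be independent uniformly random subsets of [m] and [n] of sizes k and ℓ respectively. Then E[S_{IJ}²] ≤ 3m·kℓ/(mn) + 6m·kℓ(ℓ−1)/(mn(n−1)) + d(d−1)n·k(k−1)ℓ/(m(m−1)n) + 9m²·k(k−1)ℓ(ℓ−1)/(m(m−1)n(n−1)). -/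

import Mathlib

open Finset

/-- A 3SAT clause over `n` variables: three distinct variable indices together with
three negation signs.  The `t`-th literal is satisfied by an assignment `x` iff
`x (var t) ≠ neg t`. -/
structure Clause3 (n : ℕ) where
  var : Fin 3 → Fin n
  neg : Fin 3 → Bool
  inj : Function.Injective var

/-- The clause is satisfied by the (global) assignment `x`. -/
def Clause3.satBy {n : ℕ} (C : Clause3 n) (x : Fin n → Bool) : Prop :=
  ∃ t : Fin 3, x (C.var t) ≠ C.neg t

/-- The clause is satisfied by a local assignment `α` to its three variables
(indexed by position). -/
def Clause3.satLocal {n : ℕ} (C : Clause3 n) (α : Fin 3 → Bool) : Prop :=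
  ∃ t : Fin 3, α t ≠ C.neg t

instance {n : ℕ} (C : Clause3 n) (x : Fin n → Bool) : Decidable (C.satBy x) := by
  unfold Clause3.satBy; infer_instance

instance {n : ℕ} (C : Clause3 n) (α : Fin 3 → Bool) : Decidable (C.satLocal α) := by
  unfold Clause3.satLocal; infer_instance

/-- `Z`: the set of (clause index, variable index) incidence pairs of `φ`. -/
def Zset {n m : ℕ} (φ : Fin m → Clause3 n) : Finset (Fin m × Fin n) :=
  univ.filter fun p => ∃ t : Fin 3, (φ p.1).var t = p.2

/-- The value of the clause/variable game `G_φ`. -/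
noncomputable def cvVal {n m : ℕ} (φ : Fin m → Clause3 n) : ℝ :=
  ⨆ a : Fin m → Fin 3 → Bool, ⨆ b : Fin n → Bool,
    (∑ i : Fin m, ∑ t : Fin 3,
        if (φ i).satLocal (a i) ∧ a i t = b ((φ i).var t) then (1 : ℝ) else 0) /
      (3 * (m : ℝ))

/-- The winning predicate of the birthday repetition game `G_φ^{k×ℓ}`:
for all `i ∈ I` and `j ∈ J` such that variable `j` occurs in clause `i`,
Merlin₁'s assignment to clause `i` satisfies it and agrees with Merlin₂'s
bit for variable `j`. -/
def bdWin {n m : ℕ} (φ : Fin m → Clause3 n) (I : Finset (Fin m)) (J : Finset (Fin n))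
    (a : Fin m → Fin 3 → Bool) (b : Fin n → Bool) : Prop :=
  ∀ i ∈ I, ∀ j ∈ J, ∀ t : Fin 3, (φ i).var t = j →
    ((φ i).satLocal (a i) ∧ a i t = b j)

instance {n m : ℕ} (φ : Fin m → Clause3 n) (I : Finset (Fin m)) (J : Finset (Fin n))
    (a : Fin m → Fin 3 → Bool) (b : Fin n → Bool) : Decidable (bdWin φ I J a b) := by
  unfold bdWin; infer_instance

/-- The value of the birthday repetition game `G_φ^{k×ℓ}`: Arthur sends a uniformly
random `k`-subset `I` of clause indices to Merlin₁ and, independently, a uniformly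
random `ℓ`-subset `J` of variable indices to Merlin₂; their (deterministic)
strategies answer with assignments to the clauses in `I`, resp. bits for the
variables in `J`. -/
noncomputable def bdVal {n m : ℕ} (φ : Fin m → Clause3 n) (k ℓ : ℕ) : ℝ :=
  ⨆ a : Finset (Fin m) → Fin m → Fin 3 → Bool, ⨆ b : Finset (Fin n) → Fin n → Bool,
    (∑ I ∈ (univ : Finset (Fin m)).powersetCard k,
        ∑ J ∈ (univ : Finset (Fin n)).powersetCard ℓ,
          if bdWin φ I J (a I) (b J) then (1 : ℝ) else 0) /
      ((((univ : Finset (Fin m)).powersetCard k).card : ℝ) *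
        (((univ : Finset (Fin n)).powersetCard ℓ).card : ℝ))

/-- The probability that the pair `(I, J)` is produced by the correlated
distribution `D`: choose `(i,j)` uniformly from `Z`, then `I` uniformly among
`k`-subsets of `[m]` containing `i` and, independently, `J` uniformly among
`ℓ`-subsets of `[n]` containing `j`. -/
noncomputable def prD {n m : ℕ} (φ : Fin m → Clause3 n) (k ℓ : ℕ)
    (I : Finset (Fin m)) (J : Finset (Fin n)) : ℝ :=
  (∑ p ∈ Zset φ,
      if p.1 ∈ I ∧ p.2 ∈ J then
        (1 : ℝ) /
          ((((((univ : Finset (Fin m)).powersetCard k).filter fun I' => p.1 ∈ I').card : ℝ)) *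
            (((((univ : Finset (Fin n)).powersetCard ℓ).filter fun J' => p.2 ∈ J').card : ℝ)))
      else 0) / ((Zset φ).card : ℝ)

/-- The probability that the pair `(I, J)` is produced by the uniform
distribution `U` on pairs of a `k`-subset of `[m]` and an `ℓ`-subset of `[n]`. -/
noncomputable def prU (m n k ℓ : ℕ) : ℝ :=
  1 / ((((univ : Finset (Fin m)).powersetCard k).card : ℝ) *
    (((univ : Finset (Fin n)).powersetCard ℓ).card : ℝ))

/-- Second-moment bound on `S_{IJ} = |(I×J) ∩ Z|` for a balanced 3SAT instance:
every clause has exactly 3 distinct variables, every variable occurs in exactly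
`d` clauses, and `I`, `J` are independent uniformly random subsets of sizes `k`
and `ℓ`. -/

lemma count_one_aux {α : Type*} [DecidableEq α] (s : Finset α) {k : ℕ} (hk : 1 ≤ k)
    {a : α} (ha : a ∈ s) :
    ((s.powersetCard k).filter fun I => a ∈ I).card
      = ((s.erase a).powersetCard (k-1)).card := by
  refine Finset.card_bij' (fun I _ => I.erase a) (fun J _ => insert a J) ?hi ?hj ?li ?ri
  case hi =>
    intro I hI
    simp only [mem_filter, mem_powersetCard] at hI
    simp only [mem_powersetCard]
    exact ⟨erase_subset_erase a hI.1.1, by rw [card_erase_of_mem hI.2, hI.1.2]⟩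
  case hj =>
    intro J hJ
    simp only [mem_powersetCard] at hJ
    have haJ : a ∉ J := fun h => (mem_erase.mp (hJ.1 h)).1 rfl
    simp only [mem_filter, mem_powersetCard]
    refine ⟨⟨?_, ?_⟩, mem_insert_self a J⟩
    · intro x hx
      rcases mem_insert.mp hx with rfl | hx
      · exact ha
      · exact (erase_subset (a := a) (s := s)) (hJ.1 hx)
    · rw [card_insert_of_notMem haJ, hJ.2]
      omega
  case li =>
    intro I hI
    simp only [mem_filter] at hI
    exact insert_erase hI.2
  case ri =>
    intro J hJ
    simp only [mem_powersetCard] at hJ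
    have haJ : a ∉ J := fun h => (mem_erase.mp (hJ.1 h)).1 rfl
    exact erase_insert haJ

lemma count_two_aux {α : Type*} [DecidableEq α] (s : Finset α) {k : ℕ} (hk : 2 ≤ k)
    {a b : α} (ha : a ∈ s) (hb : b ∈ s) (hab : a ≠ b) :
    ((s.powersetCard k).filter fun I => a ∈ I ∧ b ∈ I).card
      = (((s.erase a).erase b).powersetCard (k-2)).card := by
  refine Finset.card_bij' (fun I _ => (I.erase a).erase b) (fun J _ => insert a (insert b J))
    ?hi ?hj ?li ?ri
  case hi =>
    intro I hI
    simp only [mem_filter, mem_powersetCard] at hI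
    simp only [mem_powersetCard]
    refine ⟨erase_subset_erase b (erase_subset_erase a hI.1.1), ?_⟩
    rw [card_erase_of_mem (mem_erase.mpr ⟨Ne.symm hab, hI.2.2⟩), card_erase_of_mem hI.2.1, hI.1.2]
    omega
  case hj =>
    intro J hJ
    simp only [mem_powersetCard] at hJ
    have hbJ : b ∉ J := fun h => (mem_erase.mp (hJ.1 h)).1 rfl
    have haJ : a ∉ insert b J := by
      intro h
      rcases mem_insert.mp h with h' | h'
      · exact hab h'
      · exact (mem_erase.mp (mem_erase.mp (hJ.1 h')).2).1 rfl
    simp only [mem_filter, mem_powersetCard]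
    refine ⟨⟨?_, ?_⟩, mem_insert_self a _, mem_insert_of_mem (mem_insert_self b J)⟩
    · intro x hx
      rcases mem_insert.mp hx with rfl | hx
      · exact ha
      rcases mem_insert.mp hx with rfl | hx
      · exact hb
      · exact (erase_subset (a := a) (s := s)) ((erase_subset (a := b) (s := s.erase a)) (hJ.1 hx))
    · rw [card_insert_of_notMem haJ, card_insert_of_notMem hbJ, hJ.2]
      omega
  case li =>
    intro I hI
    simp only [mem_filter] at hI
    show insert a (insert b ((I.erase a).erase b)) = I
    rw [insert_erase (mem_erase.mpr ⟨Ne.symm hab, hI.2.2⟩), insert_erase hI.2.1]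
  case ri =>
    intro J hJ
    simp only [mem_powersetCard] at hJ
    have hbJ : b ∉ J := fun h => (mem_erase.mp (hJ.1 h)).1 rfl
    have haJ : a ∉ insert b J := by
      intro h
      rcases mem_insert.mp h with h' | h'
      · exact hab h'
      · exact (mem_erase.mp (mem_erase.mp (hJ.1 h')).2).1 rfl
    show ((insert a (insert b J)).erase a).erase b = J
    rw [erase_insert haJ, erase_insert hbJ]

lemma ratio1 {α : Type*} [Fintype α] [DecidableEq α] {k : ℕ} (hk : 1 ≤ k)
    (hkm : k ≤ Fintype.card α) (a : α) :
    ((((univ : Finset α).powersetCard k).filter fun I => a ∈ I).card : ℝ)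
      = ((Fintype.card α).choose k : ℝ) * k / (Fintype.card α) := by
  set M := Fintype.card α with hM
  have hM1 : 1 ≤ M := le_trans hk hkm
  rw [count_one_aux univ hk (mem_univ a), card_powersetCard, card_erase_of_mem (mem_univ a),
    card_univ, ← hM]
  have h := Nat.add_one_mul_choose_eq (M - 1) (k - 1)
  rw [show M-1+1 = M by omega, show k-1+1 = k by omega] at h
  have h' : (M : ℝ) * ((M-1).choose (k-1) : ℝ) = (M.choose k : ℝ) * k := by exact_mod_cast h
  have hM0 : (M : ℝ) ≠ 0 := Nat.cast_ne_zero.mpr (by omega)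
  rw [eq_div_iff hM0]
  linarith [h']

lemma ratio2 {α : Type*} [Fintype α] [DecidableEq α] {k : ℕ} (hk : 1 ≤ k)
    (hkm : k ≤ Fintype.card α) (hM2 : 2 ≤ Fintype.card α) {a b : α} (hab : a ≠ b) :
    ((((univ : Finset α).powersetCard k).filter fun I => a ∈ I ∧ b ∈ I).card : ℝ)
      = ((Fintype.card α).choose k : ℝ) * ((k : ℝ) * ((k:ℝ) - 1)) /
          ((Fintype.card α : ℝ) * ((Fintype.card α : ℝ) - 1)) := by
  set M := Fintype.card α with hM
  have hM0 : (M : ℝ) ≠ 0 := Nat.cast_ne_zero.mpr (by omega)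
  have hM1 : (M : ℝ) - 1 ≠ 0 := by
    have : (2 : ℝ) ≤ (M : ℝ) := by exact_mod_cast hM2
    linarith
  rcases Nat.lt_or_ge k 2 with hk2 | hk2
  · have hk1 : k = 1 := by omega
    subst hk1
    have hempty : (((univ : Finset α).powersetCard 1).filter fun I => a ∈ I ∧ b ∈ I) = ∅ := by
      rw [Finset.eq_empty_iff_forall_notMem]
      intro I hI
      simp only [mem_filter, mem_powersetCard] at hI
      have : ({a, b} : Finset α) ⊆ I := by
        intro x hx
        rcases Finset.mem_insert.mp hx with rfl | hx
        · exact hI.2.1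
        · rw [Finset.mem_singleton.mp hx]; exact hI.2.2
      have := Finset.card_le_card this
      rw [Finset.card_pair hab, hI.1.2] at this
      omega
    rw [hempty]
    norm_num
  · rw [count_two_aux univ hk2 (mem_univ a) (mem_univ b) hab, card_powersetCard]
    have hcard : ((univ.erase a).erase b).card = M - 2 := by
      rw [card_erase_of_mem (mem_erase.mpr ⟨Ne.symm hab, mem_univ b⟩),
        card_erase_of_mem (mem_univ a), card_univ, ← hM]
      omega
    rw [hcard]
    have hM1' : 1 ≤ M := by omega
    have h1 := Nat.add_one_mul_choose_eq (M - 1) (k - 1)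
    rw [show M-1+1 = M by omega, show k-1+1 = k by omega] at h1
    have h2 := Nat.add_one_mul_choose_eq (M - 2) (k - 2)
    rw [show M-2+1 = M - 1 by omega, show k-2+1 = k - 1 by omega] at h2
    have h3 : M * ((M-1) * ((M-2).choose (k-2))) = M.choose k * k * (k-1) := by
      rw [h2, ← Nat.mul_assoc, h1]
    have h3' : (M : ℝ) * (((M:ℝ) - 1) * (((M-2).choose (k-2) : ℕ) : ℝ))
        = (M.choose k : ℝ) * (k : ℝ) * ((k:ℝ) - 1) := by
      have c1 : ((M - 1 : ℕ) : ℝ) = (M : ℝ) - 1 := by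
        push_cast [Nat.cast_sub hM1']; ring
      have c2 : ((k - 1 : ℕ) : ℝ) = (k : ℝ) - 1 := by
        push_cast [Nat.cast_sub hk]; ring
      calc (M : ℝ) * (((M:ℝ) - 1) * (((M-2).choose (k-2) : ℕ) : ℝ))
          = (M : ℝ) * (((M - 1 : ℕ) : ℝ) * (((M-2).choose (k-2) : ℕ) : ℝ)) := by rw [c1]
        _ = ((M * ((M-1) * ((M-2).choose (k-2))) : ℕ) : ℝ) := by push_cast; ring
        _ = ((M.choose k * k * (k-1) : ℕ) : ℝ) := by rw [h3]
        _ = (M.choose k : ℝ) * (k : ℝ) * ((k:ℝ) - 1) := by push_cast [c2]; ring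
    rw [eq_div_iff (mul_ne_zero hM0 hM1)]
    linear_combination h3'


lemma sum4_swap {ι κ β γ : Type*} (S : Finset ι) (T : Finset κ) (U : Finset β) (V : Finset γ)
    (f : ι → β → γ → ℝ) (g : κ → β → γ → ℝ) :
    ∑ I ∈ S, ∑ J ∈ T, ∑ p ∈ U, ∑ q ∈ V, f I p q * g J p q
      = ∑ p ∈ U, ∑ q ∈ V, (∑ I ∈ S, f I p q) * (∑ J ∈ T, g J p q) := by
  calc ∑ I ∈ S, ∑ J ∈ T, ∑ p ∈ U, ∑ q ∈ V, f I p q * g J p q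
      = ∑ I ∈ S, ∑ p ∈ U, ∑ J ∈ T, ∑ q ∈ V, f I p q * g J p q := by
        exact Finset.sum_congr rfl fun I _ => Finset.sum_comm
    _ = ∑ I ∈ S, ∑ p ∈ U, ∑ q ∈ V, ∑ J ∈ T, f I p q * g J p q := by
        exact Finset.sum_congr rfl fun I _ => Finset.sum_congr rfl fun p _ => Finset.sum_comm
    _ = ∑ I ∈ S, ∑ p ∈ U, ∑ q ∈ V, f I p q * ∑ J ∈ T, g J p q := by
        refine Finset.sum_congr rfl fun I _ => Finset.sum_congr rfl fun p _ =>
          Finset.sum_congr rfl fun q _ => ?_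
        rw [← Finset.mul_sum]
    _ = ∑ p ∈ U, ∑ I ∈ S, ∑ q ∈ V, f I p q * ∑ J ∈ T, g J p q := Finset.sum_comm
    _ = ∑ p ∈ U, ∑ q ∈ V, ∑ I ∈ S, f I p q * ∑ J ∈ T, g J p q := by
        exact Finset.sum_congr rfl fun p _ => Finset.sum_comm
    _ = ∑ p ∈ U, ∑ q ∈ V, (∑ I ∈ S, f I p q) * ∑ J ∈ T, g J p q := by
        refine Finset.sum_congr rfl fun p _ => Finset.sum_congr rfl fun q _ => ?_
        rw [← Finset.sum_mul]

lemma Z_fiber_fst {n m : ℕ} (φ : Fin m → Clause3 n) (i : Fin m) :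
    ((Zset φ).filter fun q => q.1 = i).card = 3 := by
  classical
  have h : ((Zset φ).filter fun q => q.1 = i) = {i} ×ˢ (univ.image (φ i).var) := by
    ext q
    simp only [Zset, mem_filter, mem_univ, true_and, Finset.mem_product, mem_singleton,
      Finset.mem_image, Finset.filter_congr_decidable]
    aesop
  rw [h, Finset.card_product, Finset.card_singleton,
    Finset.card_image_of_injective _ (φ i).inj]
  simp

lemma Z_fiber_snd {n m : ℕ} (φ : Fin m → Clause3 n) (j : Fin n) :
    ((Zset φ).filter fun q => q.2 = j).card
      = ((univ : Finset (Fin m)).filter fun i => ∃ t : Fin 3, (φ i).var t = j).card := by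
  classical
  refine Finset.card_bij' (fun q _ => q.1) (fun i _ => (i, j)) ?hi ?hj ?li ?ri
  case hi =>
    intro q hq
    simp only [Zset, mem_filter, mem_univ, true_and, Finset.filter_congr_decidable] at hq ⊢
    obtain ⟨⟨t, ht⟩, h2⟩ := hq
    exact ⟨t, by rw [ht, h2]⟩
  case hj =>
    intro i hi
    simp only [Zset, mem_filter, mem_univ, true_and, Finset.filter_congr_decidable] at hi ⊢
    aesop
  case li =>
    intro q hq
    simp only [mem_filter] at hq
    show (q.1, j) = q
    exact Prod.ext rfl hq.2.symm
  case ri =>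
    intro i hi
    rfl

lemma Z_card_fst {n m : ℕ} (φ : Fin m → Clause3 n) : (Zset φ).card = 3 * m := by
  classical
  rw [Finset.card_eq_sum_card_fiberwise (f := Prod.fst) (t := univ) (fun x _ => mem_univ _)]
  simp only [Z_fiber_fst]
  simp [mul_comm]

lemma Z_pair_unique {n m : ℕ} (φ : Fin m → Clause3 n) (p : Fin m × Fin n) (hp : p ∈ Zset φ) :
    (Zset φ).filter (fun q => q.1 = p.1 ∧ q.2 = p.2) = {p} := by
  classical
  ext q
  simp only [mem_filter, mem_singleton]
  constructor
  · rintro ⟨hq, h1, h2⟩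
    exact Prod.ext h1 h2
  · rintro rfl
    exact ⟨hp, rfl, rfl⟩

set_option maxHeartbeats 1000000 in
theorem expected_sq_incidence_bound {n m : ℕ} (hm : 2 ≤ m) (hn : 2 ≤ n) (d : ℕ)
    (φ : Fin m → Clause3 n)
    (hbal : ∀ j : Fin n, (univ.filter fun i => ∃ t : Fin 3, (φ i).var t = j).card = d)
    (k ℓ : ℕ) (hk1 : 1 ≤ k) (hkm : k ≤ m) (hl1 : 1 ≤ ℓ) (hln : ℓ ≤ n) :
    (∑ I ∈ (univ : Finset (Fin m)).powersetCard k,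
        ∑ J ∈ (univ : Finset (Fin n)).powersetCard ℓ,
          (((I ×ˢ J) ∩ Zset φ).card : ℝ) ^ 2) /
        ((((univ : Finset (Fin m)).powersetCard k).card : ℝ) *
          (((univ : Finset (Fin n)).powersetCard ℓ).card : ℝ))
      ≤ 3 * (m : ℝ) * ((k : ℝ) * ℓ) / ((m : ℝ) * n)
        + 6 * (m : ℝ) * ((k : ℝ) * ℓ * ((ℓ : ℝ) - 1)) / ((m : ℝ) * n * ((n : ℝ) - 1))
        + (d : ℝ) * ((d : ℝ) - 1) * n * ((k : ℝ) * ((k : ℝ) - 1) * ℓ) /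
            ((m : ℝ) * ((m : ℝ) - 1) * n)
        + 9 * (m : ℝ) ^ 2 * ((k : ℝ) * ((k : ℝ) - 1) * ℓ * ((ℓ : ℝ) - 1)) /
            ((m : ℝ) * ((m : ℝ) - 1) * n * ((n : ℝ) - 1)) := by
  classical
  have hmcard : Fintype.card (Fin m) = m := Fintype.card_fin m
  have hncard : Fintype.card (Fin n) = n := Fintype.card_fin n
  set Z := Zset φ with hZdef
  set Cmk : ℝ := ((m.choose k : ℕ) : ℝ) with hCmkdef
  set Cnl : ℝ := ((n.choose ℓ : ℕ) : ℝ) with hCnldef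
  have hm0 : (m : ℝ) ≠ 0 := Nat.cast_ne_zero.mpr (by omega)
  have hn0 : (n : ℝ) ≠ 0 := Nat.cast_ne_zero.mpr (by omega)
  have hm1 : (m : ℝ) - 1 ≠ 0 := by
    have : (2 : ℝ) ≤ (m : ℝ) := by exact_mod_cast hm
    linarith
  have hn1 : (n : ℝ) - 1 ≠ 0 := by
    have : (2 : ℝ) ≤ (n : ℝ) := by exact_mod_cast hn
    linarith
  have hCmk0 : 0 < Cmk := by
    rw [hCmkdef]
    exact_mod_cast Nat.choose_pos hkm
  have hCnl0 : 0 < Cnl := by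
    rw [hCnldef]
    exact_mod_cast Nat.choose_pos hln
  have hcardI : ((((univ : Finset (Fin m)).powersetCard k).card : ℕ) : ℝ) = Cmk := by
    rw [card_powersetCard, card_univ, hmcard, hCmkdef]
  have hcardJ : ((((univ : Finset (Fin n)).powersetCard ℓ).card : ℕ) : ℝ) = Cnl := by
    rw [card_powersetCard, card_univ, hncard, hCnldef]
  -- abbreviations for the values
  set A1 : ℝ := Cmk * k / m with hA1
  set A2 : ℝ := Cmk * ((k : ℝ) * ((k : ℝ) - 1)) / ((m : ℝ) * ((m : ℝ) - 1)) with hA2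
  set B1 : ℝ := Cnl * ℓ / n with hB1
  set B2 : ℝ := Cnl * ((ℓ : ℝ) * ((ℓ : ℝ) - 1)) / ((n : ℝ) * ((n : ℝ) - 1)) with hB2
  have hk0 : (1 : ℝ) ≤ (k : ℝ) := by exact_mod_cast hk1
  have hl0 : (1 : ℝ) ≤ (ℓ : ℝ) := by exact_mod_cast hl1
  have hm2 : (2 : ℝ) ≤ (m : ℝ) := by exact_mod_cast hm
  have hn2 : (2 : ℝ) ≤ (n : ℝ) := by exact_mod_cast hn
  have hA2nonneg : 0 ≤ A2 := by
    rw [hA2]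
    apply div_nonneg
    · apply mul_nonneg hCmk0.le
      apply mul_nonneg (by positivity)
      linarith
    · apply mul_nonneg (by positivity)
      linarith
  have hB2nonneg : 0 ≤ B2 := by
    rw [hB2]
    apply div_nonneg
    · apply mul_nonneg hCnl0.le
      apply mul_nonneg (by positivity)
      linarith
    · apply mul_nonneg (by positivity)
      linarith
  -- the diagonal / off-diagonal values of the subset-pair counts
  have hNAdiag : ∀ i : Fin m,
      (((((univ : Finset (Fin m)).powersetCard k).filter fun I => i ∈ I ∧ i ∈ I).card : ℕ) : ℝ)
        = A1 := by
    intro i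
    have h : (((univ : Finset (Fin m)).powersetCard k).filter fun I => i ∈ I ∧ i ∈ I)
        = (((univ : Finset (Fin m)).powersetCard k).filter fun I => i ∈ I) := by
      simp
    rw [h, ratio1 hk1 (by rw [hmcard]; exact hkm) i, hmcard, hA1, hCmkdef]
  have hNAoff : ∀ i i' : Fin m, i ≠ i' →
      (((((univ : Finset (Fin m)).powersetCard k).filter fun I => i ∈ I ∧ i' ∈ I).card : ℕ) : ℝ)
        = A2 := by
    intro i i' hii
    rw [ratio2 hk1 (by rw [hmcard]; exact hkm) (by rw [hmcard]; exact hm) hii, hmcard, hA2,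
      hCmkdef]
  have hNBdiag : ∀ j : Fin n,
      (((((univ : Finset (Fin n)).powersetCard ℓ).filter fun J => j ∈ J ∧ j ∈ J).card : ℕ) : ℝ)
        = B1 := by
    intro j
    have h : (((univ : Finset (Fin n)).powersetCard ℓ).filter fun J => j ∈ J ∧ j ∈ J)
        = (((univ : Finset (Fin n)).powersetCard ℓ).filter fun J => j ∈ J) := by
      simp
    rw [h, ratio1 hl1 (by rw [hncard]; exact hln) j, hncard, hB1, hCnldef]
  have hNBoff : ∀ j j' : Fin n, j ≠ j' →
      (((((univ : Finset (Fin n)).powersetCard ℓ).filter fun J => j ∈ J ∧ j' ∈ J).card : ℕ) : ℝ)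
        = B2 := by
    intro j j' hjj
    rw [ratio2 hl1 (by rw [hncard]; exact hln) (by rw [hncard]; exact hn) hjj, hncard, hB2,
      hCnldef]
  -- the product count function
  set F : (Fin m × Fin n) → (Fin m × Fin n) → ℝ := fun p q =>
    (((((univ : Finset (Fin m)).powersetCard k).filter fun I => p.1 ∈ I ∧ q.1 ∈ I).card : ℕ) : ℝ)
      * (((((univ : Finset (Fin n)).powersetCard ℓ).filter
            fun J => p.2 ∈ J ∧ q.2 ∈ J).card : ℕ) : ℝ) with hF
  have hFeq : ∀ p q : Fin m × Fin n, F p q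
      = (((((univ : Finset (Fin m)).powersetCard k).filter
            fun I => p.1 ∈ I ∧ q.1 ∈ I).card : ℕ) : ℝ)
        * (((((univ : Finset (Fin n)).powersetCard ℓ).filter
            fun J => p.2 ∈ J ∧ q.2 ∈ J).card : ℕ) : ℝ) := fun _ _ => rfl
  -- rewrite the squared cardinality as a double sum of indicator products
  have key : ∀ (I : Finset (Fin m)) (J : Finset (Fin n)),
      (((I ×ˢ J) ∩ Z).card : ℝ) ^ 2
        = ∑ p ∈ Z, ∑ q ∈ Z,
            (if p.1 ∈ I ∧ q.1 ∈ I then (1 : ℝ) else 0)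
              * (if p.2 ∈ J ∧ q.2 ∈ J then (1 : ℝ) else 0) := by
    intro I J
    have h1 : (I ×ˢ J) ∩ Z = Z.filter (fun p => p.1 ∈ I ∧ p.2 ∈ J) := by
      ext p
      simp only [Finset.mem_inter, Finset.mem_product, mem_filter]
      tauto
    rw [h1, Finset.card_filter]
    push_cast
    rw [sq, Finset.sum_mul_sum]
    refine Finset.sum_congr rfl fun p _ => Finset.sum_congr rfl fun q _ => ?_
    by_cases h1 : p.1 ∈ I <;> by_cases h2 : p.2 ∈ J <;> by_cases h3 : q.1 ∈ I <;>
      by_cases h4 : q.2 ∈ J <;> simp [h1, h2, h3, h4]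
  -- the numerator equals the sum over Z × Z of F
  have hnum : (∑ I ∈ (univ : Finset (Fin m)).powersetCard k,
        ∑ J ∈ (univ : Finset (Fin n)).powersetCard ℓ,
          (((I ×ˢ J) ∩ Z).card : ℝ) ^ 2)
      = ∑ p ∈ Z, ∑ q ∈ Z, F p q := by
    calc (∑ I ∈ (univ : Finset (Fin m)).powersetCard k,
          ∑ J ∈ (univ : Finset (Fin n)).powersetCard ℓ, (((I ×ˢ J) ∩ Z).card : ℝ) ^ 2)
        = ∑ I ∈ (univ : Finset (Fin m)).powersetCard k,
            ∑ J ∈ (univ : Finset (Fin n)).powersetCard ℓ, ∑ p ∈ Z, ∑ q ∈ Z,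
              (if p.1 ∈ I ∧ q.1 ∈ I then (1 : ℝ) else 0)
                * (if p.2 ∈ J ∧ q.2 ∈ J then (1 : ℝ) else 0) := by
          exact Finset.sum_congr rfl fun I _ => Finset.sum_congr rfl fun J _ => key I J
      _ = ∑ p ∈ Z, ∑ q ∈ Z,
            (∑ I ∈ (univ : Finset (Fin m)).powersetCard k,
              if p.1 ∈ I ∧ q.1 ∈ I then (1 : ℝ) else 0)
            * (∑ J ∈ (univ : Finset (Fin n)).powersetCard ℓ,
              if p.2 ∈ J ∧ q.2 ∈ J then (1 : ℝ) else 0) :=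
          sum4_swap _ _ _ _ _ _
      _ = ∑ p ∈ Z, ∑ q ∈ Z, F p q := by
          refine Finset.sum_congr rfl fun p _ => Finset.sum_congr rfl fun q _ => ?_
          rw [Finset.sum_boole, Finset.sum_boole, hF]
  -- balanced degree facts
  have hZfst : ∀ i : Fin m, (Z.filter fun q => q.1 = i).card = 3 := Z_fiber_fst φ
  have hZsnd : ∀ j : Fin n, (Z.filter fun q => q.2 = j).card = d := by
    intro j
    rw [hZdef, Z_fiber_snd φ j, hbal j]
  have hZcard : Z.card = 3 * m := Z_card_fst φ
  have hdn : d * n = 3 * m := by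
    have h2 : Z.card = ∑ j : Fin n, (Z.filter fun q => q.2 = j).card :=
      Finset.card_eq_sum_card_fiberwise (f := Prod.snd) (t := univ) (fun x _ => mem_univ _)
    rw [hZcard] at h2
    simp only [hZsnd, Finset.sum_const, card_univ, hncard, smul_eq_mul] at h2
    rw [mul_comm]
    omega
  -- the per-row bound
  have hinner : ∀ p ∈ Z, (∑ q ∈ Z, F p q)
      ≤ A1 * B1 + 2 * (A1 * B2) + ((d : ℝ) - 1) * (A2 * B1) + 3 * (m : ℝ) * (A2 * B2) := by
    intro p hp
    rw [← Finset.sum_filter_add_sum_filter_not Z (fun q => q.1 = p.1) (F p),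
      ← Finset.sum_filter_add_sum_filter_not (Z.filter fun q => q.1 = p.1)
        (fun q => q.2 = p.2) (F p),
      ← Finset.sum_filter_add_sum_filter_not (Z.filter fun q => ¬ q.1 = p.1)
        (fun q => q.2 = p.2) (F p)]
    have e1 : ((Z.filter fun q => q.1 = p.1).filter fun q => q.2 = p.2) = {p} := by
      rw [Finset.filter_filter, hZdef]
      exact Z_pair_unique φ p hp
    have s1 : ∑ q ∈ (Z.filter fun q => q.1 = p.1).filter (fun q => q.2 = p.2), F p q
        = A1 * B1 := by
      rw [e1, Finset.sum_singleton, hFeq p p, hNAdiag p.1, hNBdiag p.2]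
    have s2 : ∑ q ∈ (Z.filter fun q => q.1 = p.1).filter (fun q => ¬ q.2 = p.2), F p q
        = 2 * (A1 * B2) := by
      have hterm : ∀ q ∈ (Z.filter fun q => q.1 = p.1).filter (fun q => ¬ q.2 = p.2),
          F p q = A1 * B2 := by
        intro q hq
        simp only [mem_filter] at hq
        have h1 : q.1 = p.1 := hq.1.2
        rw [hFeq p q, h1, hNAdiag p.1, hNBoff p.2 q.2 (fun h => hq.2 h.symm)]
      rw [Finset.sum_congr rfl hterm, Finset.sum_const]
      have hc : ((Z.filter fun q => q.1 = p.1).filter (fun q => ¬ q.2 = p.2)).card = 2 := by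
        have := Finset.card_filter_add_card_filter_not
          (s := Z.filter fun q => q.1 = p.1) (p := fun q => q.2 = p.2)
        rw [e1, Finset.card_singleton, hZfst p.1] at this
        omega
      rw [hc]
      simp [mul_comm]
    have e3 : ((Z.filter fun q => q.2 = p.2).filter fun q => q.1 = p.1) = {p} := by
      ext q
      simp only [mem_filter, mem_singleton]
      constructor
      · rintro ⟨⟨hq, h2⟩, h1⟩
        exact Prod.ext h1 h2
      · rintro rfl
        exact ⟨⟨hp, rfl⟩, rfl⟩
    have hc3 : ((Z.filter fun q => ¬ q.1 = p.1).filter (fun q => q.2 = p.2)).card = d - 1 := by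
      have hcomm : ((Z.filter fun q => ¬ q.1 = p.1).filter (fun q => q.2 = p.2))
          = ((Z.filter fun q => q.2 = p.2).filter (fun q => ¬ q.1 = p.1)) := by
        ext q
        simp only [mem_filter]
        tauto
      have := Finset.card_filter_add_card_filter_not
        (s := Z.filter fun q => q.2 = p.2) (p := fun q => q.1 = p.1)
      rw [e3, Finset.card_singleton, hZsnd p.2] at this
      rw [hcomm]
      omega
    have hd1 : 1 ≤ d := by
      have := hc3
      have h2 := hZsnd p.2
      -- d ≥ 1 since p itself is in the fiber
      have hpmem : p ∈ Z.filter fun q => q.2 = p.2 := by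
        simp only [mem_filter]
        exact ⟨hp, trivial⟩
      have := Finset.card_pos.mpr ⟨p, hpmem⟩
      omega
    have s3 : ∑ q ∈ (Z.filter fun q => ¬ q.1 = p.1).filter (fun q => q.2 = p.2), F p q
        = ((d : ℝ) - 1) * (A2 * B1) := by
      have hterm : ∀ q ∈ (Z.filter fun q => ¬ q.1 = p.1).filter (fun q => q.2 = p.2),
          F p q = A2 * B1 := by
        intro q hq
        simp only [mem_filter] at hq
        have h2 : q.2 = p.2 := hq.2
        rw [hFeq p q, h2, hNBdiag p.2, hNAoff p.1 q.1 (fun h => hq.1.2 h.symm)]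
      rw [Finset.sum_congr rfl hterm, Finset.sum_const, hc3]
      have : ((d - 1 : ℕ) : ℝ) = (d : ℝ) - 1 := by
        push_cast [Nat.cast_sub hd1]
        ring
      rw [nsmul_eq_mul, this]
    have s4 : ∑ q ∈ (Z.filter fun q => ¬ q.1 = p.1).filter (fun q => ¬ q.2 = p.2), F p q
        ≤ 3 * (m : ℝ) * (A2 * B2) := by
      have hterm : ∀ q ∈ (Z.filter fun q => ¬ q.1 = p.1).filter (fun q => ¬ q.2 = p.2),
          F p q = A2 * B2 := by
        intro q hq
        simp only [mem_filter] at hq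
        rw [hFeq p q, hNAoff p.1 q.1 (fun h => hq.1.2 h.symm), hNBoff p.2 q.2 (fun h => hq.2 h.symm)]
      rw [Finset.sum_congr rfl hterm, Finset.sum_const, nsmul_eq_mul]
      have hsub : ((Z.filter fun q => ¬ q.1 = p.1).filter (fun q => ¬ q.2 = p.2)).card
          ≤ 3 * m := by
        calc ((Z.filter fun q => ¬ q.1 = p.1).filter (fun q => ¬ q.2 = p.2)).card
            ≤ Z.card := Finset.card_le_card
              ((Finset.filter_subset _ _).trans (Finset.filter_subset _ _))
          _ = 3 * m := hZcard
      have hcast : (((Z.filter fun q => ¬ q.1 = p.1).filter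
          (fun q => ¬ q.2 = p.2)).card : ℝ) ≤ 3 * (m : ℝ) := by
        exact_mod_cast hsub
      exact mul_le_mul_of_nonneg_right hcast (mul_nonneg hA2nonneg hB2nonneg)
    rw [s1, s2, s3]
    linarith [s4]
  -- assemble the bound on the numerator
  have hZcast : ((Z.card : ℕ) : ℝ) = 3 * m := by
    rw [hZcard]; push_cast; ring
  have hnumbound : (∑ p ∈ Z, ∑ q ∈ Z, F p q)
      ≤ 3 * (m : ℝ) * (A1 * B1 + 2 * (A1 * B2) + ((d : ℝ) - 1) * (A2 * B1)
          + 3 * (m : ℝ) * (A2 * B2)) := by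
    calc (∑ p ∈ Z, ∑ q ∈ Z, F p q)
        ≤ ∑ _p ∈ Z, (A1 * B1 + 2 * (A1 * B2) + ((d : ℝ) - 1) * (A2 * B1)
            + 3 * (m : ℝ) * (A2 * B2)) := Finset.sum_le_sum hinner
      _ = 3 * (m : ℝ) * (A1 * B1 + 2 * (A1 * B2) + ((d : ℝ) - 1) * (A2 * B1)
            + 3 * (m : ℝ) * (A2 * B2)) := by
          rw [Finset.sum_const, nsmul_eq_mul, hZcast]
  -- finish
  rw [hcardI, hcardJ, hnum]
  have hCpos : 0 < Cmk * Cnl := mul_pos hCmk0 hCnl0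
  have hd3 : (d : ℝ) * ((d : ℝ) - 1) * (n : ℝ) = 3 * (m : ℝ) * ((d : ℝ) - 1) := by
    have h : (d : ℝ) * (n : ℝ) = 3 * (m : ℝ) := by exact_mod_cast hdn
    linear_combination ((d : ℝ) - 1) * h
  rw [hd3]
  calc (∑ p ∈ Z, ∑ q ∈ Z, F p q) / (Cmk * Cnl)
      ≤ (3 * (m : ℝ) * (A1 * B1 + 2 * (A1 * B2) + ((d : ℝ) - 1) * (A2 * B1)
          + 3 * (m : ℝ) * (A2 * B2))) / (Cmk * Cnl) :=
        (div_le_div_iff_of_pos_right hCpos).mpr hnumbound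
    _ = 3 * (m : ℝ) * ((k : ℝ) * ℓ) / ((m : ℝ) * n)
        + 6 * (m : ℝ) * ((k : ℝ) * ℓ * ((ℓ : ℝ) - 1)) / ((m : ℝ) * n * ((n : ℝ) - 1))
        + 3 * (m : ℝ) * ((d : ℝ) - 1) * ((k : ℝ) * ((k : ℝ) - 1) * ℓ) /
            ((m : ℝ) * ((m : ℝ) - 1) * n)
        + 9 * (m : ℝ) ^ 2 * ((k : ℝ) * ((k : ℝ) - 1) * ℓ * ((ℓ : ℝ) - 1)) /
            ((m : ℝ) * ((m : ℝ) - 1) * n * ((n : ℝ) - 1)) := by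
        rw [hA1, hA2, hB1, hB2]
        field_simp
        ring
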